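/- arXiv:1805.09450 — 2 statements merged into one kernel-verified Lean document; each statement's English description precedes it below -/
import Mathlib

section
/- For every u ≤ 0, √(2/π) · (1/(−u + √(u²+4))) · e^{−u²/2} ≤ Ψ(u), where Ψ(u) = (1/√(2π)) ∫_{−∞}^u e^{−t²/2} dt is the standard normal CDF. -/
open Real MeasureTheory Filter Set Topology

/-- The standard normal cumulative distribution function. -/
noncomputable def stdNormalCDF (v : ℝ) : ℝ :=
  (Real.sqrt (2 * Real.pi))⁻¹ * ∫ t in Set.Iic v, Real.exp (-t ^ 2 / 2)

namespace StdNormalAux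

/-- The Gaussian density (unnormalized). -/
noncomputable def g (t : ℝ) : ℝ := Real.exp (-t ^ 2 / 2)

lemma g_pos (t : ℝ) : 0 < g t := Real.exp_pos _

lemma g_cont : Continuous g :=
  Real.continuous_exp.comp (((continuous_pow 2).neg).div_const 2)

lemma g_int : Integrable g := by
  have h : Integrable (fun x : ℝ => Real.exp (-(1/2) * x ^ 2)) :=
    integrable_exp_neg_mul_sq (by norm_num)
  have e : (fun x : ℝ => Real.exp (-(1/2) * x ^ 2)) = g := by
    funext x; unfold g; congr 1; ring
  rwa [e] at h

/-- Derivative of the CDF integral. -/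
lemma hasDerivAt_intIic (u : ℝ) :
    HasDerivAt (fun v => ∫ t in Iic v, g t) (g u) u := by
  have key : ∀ v : ℝ, ∫ t in Iic v, g t = (∫ t in Iic (0:ℝ), g t) + ∫ t in (0:ℝ)..v, g t := by
    intro v
    have := intervalIntegral.integral_Iic_sub_Iic (μ := volume) (f := g) (a := (0:ℝ)) (b := v)
      g_int.integrableOn g_int.integrableOn
    linarith
  have h2 : HasDerivAt (fun v => ∫ t in (0:ℝ)..v, g t) (g u) u :=
    intervalIntegral.integral_hasDerivAt_right (g_int.intervalIntegrable)
      g_cont.aestronglyMeasurable.stronglyMeasurableAtFilter g_cont.continuousAt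
  have h3 := h2.const_add (∫ t in Iic (0:ℝ), g t)
  exact h3.congr_of_eventuallyEq (Filter.Eventually.of_forall key)

/-- The lower-bound function. -/
noncomputable def bnd (u : ℝ) : ℝ :=
  Real.sqrt (2 / Real.pi) * (g u / (-u + Real.sqrt (u ^ 2 + 4)))

lemma sqrt_lt (u : ℝ) : |u| < Real.sqrt (u ^ 2 + 4) := by
  have h : |u| = Real.sqrt (u ^ 2) := by
    rw [Real.sqrt_sq_eq_abs]
  rw [h]
  exact Real.sqrt_lt_sqrt (sq_nonneg u) (by linarith)

lemma den_pos (u : ℝ) : 0 < -u + Real.sqrt (u ^ 2 + 4) := by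
  have h1 := sqrt_lt u
  have h2 := le_abs_self u
  linarith

lemma hasDerivAt_sqrtterm (u : ℝ) :
    HasDerivAt (fun v : ℝ => Real.sqrt (v ^ 2 + 4)) (u / Real.sqrt (u ^ 2 + 4)) u := by
  have h1 : HasDerivAt (fun v : ℝ => v ^ 2 + 4) (2 * u) u := by
    simpa using (hasDerivAt_pow 2 u).add_const 4
  have h2 := (Real.hasDerivAt_sqrt (by positivity : u ^ 2 + 4 ≠ 0)).comp u h1
  refine h2.congr_deriv ?_
  have hs : Real.sqrt (u ^ 2 + 4) ≠ 0 := by positivity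
  field_simp

lemma hasDerivAt_g (u : ℝ) : HasDerivAt g (-u * g u) u := by
  have h1 : HasDerivAt (fun v : ℝ => -v ^ 2 / 2) (-u) u := by
    have := ((hasDerivAt_pow 2 u).neg).div_const 2
    refine this.congr_deriv ?_
    simp; ring
  have h2 := h1.exp
  have : (fun v : ℝ => Real.exp (-v ^ 2 / 2)) = g := rfl
  rw [this] at h2
  convert h2 using 1
  show -u * g u = g u * -u
  ring

lemma hasDerivAt_bnd (u : ℝ) :
    HasDerivAt bnd
      (Real.sqrt (2 / Real.pi) *
        ((-u * g u * (-u + Real.sqrt (u ^ 2 + 4)) - g u * (-1 + u / Real.sqrt (u ^ 2 + 4))) /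
          (-u + Real.sqrt (u ^ 2 + 4)) ^ 2)) u := by
  have hd : HasDerivAt (fun v : ℝ => -v + Real.sqrt (v ^ 2 + 4))
      (-1 + u / Real.sqrt (u ^ 2 + 4)) u :=
    (hasDerivAt_neg u).add (hasDerivAt_sqrtterm u)
  exact ((hasDerivAt_g u).div hd (den_pos u).ne').const_mul _

lemma sqrt_two_div_pi : Real.sqrt (2 / Real.pi) = 2 * (Real.sqrt (2 * Real.pi))⁻¹ := by
  have h : Real.sqrt (2 / Real.pi) * Real.sqrt (2 * Real.pi) = 2 := by
    rw [← Real.sqrt_mul (by positivity : (0:ℝ) ≤ 2 / Real.pi)]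
    have h4 : 2 / Real.pi * (2 * Real.pi) = 2 ^ 2 := by
      field_simp
    rw [h4, Real.sqrt_sq (by norm_num : (0:ℝ) ≤ 2)]
  rw [eq_mul_inv_iff_mul_eq₀ (by positivity : Real.sqrt (2 * Real.pi) ≠ 0)]
  exact h

/-- The difference function. -/
noncomputable def D (u : ℝ) : ℝ := (Real.sqrt (2 * Real.pi))⁻¹ * (∫ t in Iic u, g t) - bnd u

lemma hasDerivAt_D (u : ℝ) :
    HasDerivAt D
      ((Real.sqrt (2 * Real.pi))⁻¹ * g u -
        Real.sqrt (2 / Real.pi) *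
          ((-u * g u * (-u + Real.sqrt (u ^ 2 + 4)) - g u * (-1 + u / Real.sqrt (u ^ 2 + 4))) /
            (-u + Real.sqrt (u ^ 2 + 4)) ^ 2)) u :=
  ((hasDerivAt_intIic u).const_mul _).sub (hasDerivAt_bnd u)

lemma derivD_nonneg (u : ℝ) :
    0 ≤ (Real.sqrt (2 * Real.pi))⁻¹ * g u -
        Real.sqrt (2 / Real.pi) *
          ((-u * g u * (-u + Real.sqrt (u ^ 2 + 4)) - g u * (-1 + u / Real.sqrt (u ^ 2 + 4))) /
            (-u + Real.sqrt (u ^ 2 + 4)) ^ 2) := by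
  set s := Real.sqrt (u ^ 2 + 4) with hs
  set d := -u + s with hdd
  have hspos : 0 < s := by positivity
  have hs2 : s ^ 2 = u ^ 2 + 4 := Real.sq_sqrt (by positivity)
  have hdpos : 0 < d := den_pos u
  have hE : 0 < g u := g_pos u
  have hc0 : 0 < (Real.sqrt (2 * Real.pi))⁻¹ := by positivity
  have husle : -s ≤ u := by have := sqrt_lt u; have := neg_abs_le u; simp only [← hs] at *; linarith
  have hd' : (-1 : ℝ) + u / s ≥ -2 := by
    have : u / s ≥ -1 := by
      rw [ge_iff_le, neg_le, ← neg_div]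
      exact (div_le_one hspos).mpr (by linarith)
    linarith
  have hd2 : d ^ 2 = 2 * (-u) * d + 4 := by
    have : d ^ 2 = u ^ 2 - 2 * u * s + s ^ 2 := by rw [hdd]; ring
    rw [this, hs2]; ring
  rw [sqrt_two_div_pi]
  set c0 := (Real.sqrt (2 * Real.pi))⁻¹
  rw [sub_nonneg]
  have key : 2 * c0 * ((-u * g u * d - g u * (-1 + u / s)) / d ^ 2)
      = (2 * c0 * (-u * g u * d - g u * (-1 + u / s))) / d ^ 2 := by ring
  rw [key, div_le_iff₀ (by positivity : (0:ℝ) < d ^ 2)]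
  nlinarith [mul_pos hc0 hE,
    mul_nonneg (mul_pos hc0 hE).le (by linarith : (0:ℝ) ≤ (-1 + u / s) + 2)]

end StdNormalAux

/-- Lower bound on the standard Gaussian CDF for nonpositive arguments
(inequality 7.1.13 of Abramowitz–Stegun). -/
theorem stdNormalCDF_lower_bound (u : ℝ) (hu : u ≤ 0) :
    Real.sqrt (2 / Real.pi) * (1 / (-u + Real.sqrt (u ^ 2 + 4))) * Real.exp (-u ^ 2 / 2)
      ≤ stdNormalCDF u := by
  classical
  open StdNormalAux in
  have hdiff : Differentiable ℝ D := fun x => (hasDerivAt_D x).differentiableAt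
  have hmono : Monotone D := by
    apply monotone_of_deriv_nonneg hdiff
    intro x
    rw [(hasDerivAt_D x).deriv]
    exact derivD_nonneg x
  -- pointwise bound used twice : for t ≤ -2, -t^2/2 ≤ t
  have hpt : ∀ t : ℝ, t ≤ -2 → -t ^ 2 / 2 ≤ t := by
    intro t ht; nlinarith
  -- the CDF integral tends to 0 at -∞
  have hIlim : Tendsto (fun v => ∫ t in Iic v, g t) atBot (𝓝 0) := by
    have hlow : ∀ᶠ v : ℝ in atBot, 0 ≤ ∫ t in Iic v, g t :=
      Eventually.of_forall fun v =>
        setIntegral_nonneg measurableSet_Iic fun t _ => (g_pos t).le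
    have hup : ∀ᶠ v : ℝ in atBot, (∫ t in Iic v, g t) ≤ Real.exp v := by
      filter_upwards [eventually_le_atBot (-2 : ℝ)] with v hv
      calc (∫ t in Iic v, g t) ≤ ∫ t in Iic v, Real.exp t := by
            apply setIntegral_mono_on g_int.integrableOn (integrableOn_exp_Iic v)
              measurableSet_Iic
            intro t ht
            exact Real.exp_le_exp.mpr (hpt t (le_trans ht hv))
        _ = Real.exp v := integral_exp_Iic v
    exact tendsto_of_tendsto_of_tendsto_of_le_of_le' tendsto_const_nhds
      Real.tendsto_exp_atBot hlow hup
  -- g tends to 0 at -∞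
  have hgl : Tendsto g atBot (𝓝 0) := by
    have h0 : Tendsto (fun v : ℝ => -v ^ 2 / 2) atBot atBot := by
      apply tendsto_atBot_mono' atBot _ tendsto_id
      filter_upwards [eventually_le_atBot (-2 : ℝ)] with v hv
      exact hpt v hv
    exact Real.tendsto_exp_atBot.comp h0
  -- the bound tends to 0 at -∞
  have hblim : Tendsto bnd atBot (𝓝 0) := by
    have hlow : ∀ᶠ v : ℝ in atBot, 0 ≤ bnd v :=
      Eventually.of_forall fun v => by
        have := den_pos v
        have := g_pos v
        unfold bnd
        positivity
    have hup : ∀ᶠ v : ℝ in atBot, bnd v ≤ Real.sqrt (2 / Real.pi) / 2 * g v := by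
      filter_upwards [eventually_le_atBot (0 : ℝ)] with v hv
      unfold bnd
      have hs2 : (2 : ℝ) ≤ Real.sqrt (v ^ 2 + 4) := by
        rw [show (2:ℝ) = Real.sqrt 4 by
          rw [show (4:ℝ) = 2 ^ 2 by norm_num, Real.sqrt_sq (by norm_num : (0:ℝ) ≤ 2)]]
        exact Real.sqrt_le_sqrt (by nlinarith)
      have hd2 : (2 : ℝ) ≤ -v + Real.sqrt (v ^ 2 + 4) := by linarith
      have hgp := g_pos v
      have hrw : Real.sqrt (2 / Real.pi) / 2 * g v
          = Real.sqrt (2 / Real.pi) * (g v / 2) := by ring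
      rw [hrw]
      apply mul_le_mul_of_nonneg_left _ (Real.sqrt_nonneg _)
      gcongr
    have hupl : Tendsto (fun v => Real.sqrt (2 / Real.pi) / 2 * g v) atBot (𝓝 0) := by
      have := hgl.const_mul (Real.sqrt (2 / Real.pi) / 2)
      simpa using this
    exact tendsto_of_tendsto_of_tendsto_of_le_of_le' tendsto_const_nhds hupl hlow hup
  have hDlim : Tendsto D atBot (𝓝 0) := by
    have h1 := (hIlim.const_mul (Real.sqrt (2 * Real.pi))⁻¹).sub hblim
    rw [mul_zero, sub_zero] at h1
    exact h1
  have hD : 0 ≤ D u :=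
    le_of_tendsto hDlim <| by
      filter_upwards [eventually_le_atBot u] with v hv
      exact hmono hv
  have heq : bnd u = Real.sqrt (2 / Real.pi) * (1 / (-u + Real.sqrt (u ^ 2 + 4))) *
      Real.exp (-u ^ 2 / 2) := by
    unfold bnd g; ring
  unfold D at hD
  unfold stdNormalCDF
  have : (∫ t in Set.Iic u, Real.exp (-t ^ 2 / 2)) = ∫ t in Iic u, g t := rfl
  rw [this, ← heq]
  linarith
end

section
/- Let F(w,v) = log Ψ(w) − log Ψ(v) where Ψ is the standard normal CDF. Then for all w > v and all M ≥ 1: if v ≤ −M then F(w,v) ≤ 2v² + 1/M², and if v ≥ −M then F(w,v) ≤ (w−v)/∫_{−∞}^{−M} e^{−t²/2} dt. -/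
open Real MeasureTheory

lemma gauss_integrable : Integrable (fun t : ℝ => Real.exp (-t ^ 2 / 2)) := by
  have := integrable_exp_neg_mul_sq (by norm_num : (0:ℝ) < 1/2)
  convert this using 2 with t
  ring_nf

lemma Iint_pos (v : ℝ) : 0 < ∫ t in Set.Iic v, Real.exp (-t ^ 2 / 2) := by
  rw [setIntegral_pos_iff_support_of_nonneg_ae]
  · have : Function.support (fun t : ℝ => Real.exp (-t ^ 2 / 2)) = Set.univ := by
      ext t; simp [Real.exp_ne_zero]
    rw [this]
    simp [Real.volume_Iic]
  · exact Filter.Eventually.of_forall fun t => (Real.exp_pos _).le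
  · exact gauss_integrable.integrableOn

lemma Iint_mono {a b : ℝ} (h : a ≤ b) :
    (∫ t in Set.Iic a, Real.exp (-t ^ 2 / 2)) ≤ ∫ t in Set.Iic b, Real.exp (-t ^ 2 / 2) := by
  apply setIntegral_mono_set gauss_integrable.integrableOn
    (Filter.Eventually.of_forall fun t => (Real.exp_pos _).le)
  exact HasSubset.Subset.eventuallyLE (Set.Iic_subset_Iic.2 h)

lemma Iint_le (v : ℝ) : (∫ t in Set.Iic v, Real.exp (-t ^ 2 / 2)) ≤ Real.sqrt (2 * Real.pi) := by
  have h1 : (∫ t : ℝ, Real.exp (-t ^ 2 / 2)) = Real.sqrt (2 * Real.pi) := by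
    have h := integral_gaussian (1/2)
    rw [show π / (1/2) = 2 * π by ring] at h
    rw [← h]
    congr 1; ext t; congr 1; ring
  calc (∫ t in Set.Iic v, Real.exp (-t ^ 2 / 2)) ≤ ∫ t : ℝ, Real.exp (-t ^ 2 / 2) := by
        apply setIntegral_le_integral gauss_integrable
          (Filter.Eventually.of_forall fun t => (Real.exp_pos _).le)
    _ = _ := h1

lemma psi_pos (v : ℝ) : 0 < stdNormalCDF v := by
  unfold stdNormalCDF
  have h2 : 0 < Real.sqrt (2 * Real.pi) := Real.sqrt_pos.2 (by positivity)
  exact mul_pos (inv_pos.2 h2) (Iint_pos v)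

lemma psi_le_one (v : ℝ) : stdNormalCDF v ≤ 1 := by
  unfold stdNormalCDF
  have h2 : 0 < Real.sqrt (2 * Real.pi) := Real.sqrt_pos.2 (by positivity)
  rw [inv_mul_le_iff₀ h2, mul_one]
  exact Iint_le v

lemma log_le_div_e {x : ℝ} (hx : 0 < x) : Real.log x ≤ x / Real.exp 1 := by
  have h := Real.log_le_sub_one_of_pos (show 0 < x / Real.exp 1 by positivity)
  rw [Real.log_div hx.ne' (Real.exp_ne_zero 1), Real.log_exp] at h
  linarith

lemma Iint_lower {v : ℝ} (hv : v ≤ -1) :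
    Real.exp (-(v - 1) ^ 2 / 2) ≤ ∫ t in Set.Iic v, Real.exp (-t ^ 2 / 2) := by
  have h1 : (∫ t in Set.Icc (v - 1) v, Real.exp (-t ^ 2 / 2))
      ≤ ∫ t in Set.Iic v, Real.exp (-t ^ 2 / 2) := by
    apply setIntegral_mono_set gauss_integrable.integrableOn
      (Filter.Eventually.of_forall fun t => (Real.exp_pos _).le)
    exact HasSubset.Subset.eventuallyLE (fun t ht => ht.2)
  have h2 : Real.exp (-(v - 1) ^ 2 / 2)
      ≤ ∫ t in Set.Icc (v - 1) v, Real.exp (-t ^ 2 / 2) := by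
    have hc : (∫ _t in Set.Icc (v - 1) v, Real.exp (-(v - 1) ^ 2 / 2))
        = Real.exp (-(v - 1) ^ 2 / 2) := by
      rw [setIntegral_const]
      rw [Real.volume_real_Icc]
      norm_num
    rw [← hc]
    apply setIntegral_mono_on (integrableOn_const (by rw [Real.volume_Icc]; exact ENNReal.ofReal_ne_top))
      gauss_integrable.integrableOn measurableSet_Icc
    intro t ht
    apply Real.exp_le_exp.2
    have h1 := ht.1; have h2 := ht.2
    nlinarith
  linarith

lemma diff_le (v w : ℝ) (hvw : v ≤ w) :
    (∫ t in Set.Iic w, Real.exp (-t ^ 2 / 2)) - (∫ t in Set.Iic v, Real.exp (-t ^ 2 / 2))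
      ≤ w - v := by
  rw [intervalIntegral.integral_Iic_sub_Iic gauss_integrable.integrableOn gauss_integrable.integrableOn]
  have : (w - v) = ∫ _t in v..w, (1 : ℝ) := by simp
  rw [this]
  apply intervalIntegral.integral_mono_on hvw
    (gauss_integrable.intervalIntegrable) intervalIntegrable_const
  intro t _
  exact Real.exp_le_one_iff.2 (by nlinarith)

/-- Bounds on `F(w,v) = log Ψ(w) − log Ψ(v)` for `w > v`, `M ≥ 1`. -/
theorem logPsi_difference_bound (w v M : ℝ) (hwv : w > v) (hM : 1 ≤ M) :
    (v ≤ -M →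
      Real.log (stdNormalCDF w) - Real.log (stdNormalCDF v) ≤ 2 * v ^ 2 + 1 / M ^ 2) ∧
    (v ≥ -M →
      Real.log (stdNormalCDF w) - Real.log (stdNormalCDF v)
        ≤ (w - v) / ∫ t in Set.Iic (-M), Real.exp (-t ^ 2 / 2)) := by
  have hsq : 0 < Real.sqrt (2 * Real.pi) := Real.sqrt_pos.2 (by positivity)
  constructor
  · -- case v ≤ -M
    intro hv
    have hv1 : v ≤ -1 := le_trans hv (by linarith)
    have hlogw : Real.log (stdNormalCDF w) ≤ 0 :=
      Real.log_nonpos (psi_pos w).le (psi_le_one w)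
    -- lower bound on log Ψ(v)
    have hIv := Iint_lower hv1
    have hlogv : -(Real.log (stdNormalCDF v))
        ≤ (v - 1) ^ 2 / 2 + Real.log (Real.sqrt (2 * Real.pi)) := by
      unfold stdNormalCDF
      rw [Real.log_mul (by positivity) (Iint_pos v).ne', Real.log_inv]
      have : -((v - 1) ^ 2 / 2) ≤ Real.log (∫ t in Set.Iic v, Real.exp (-t ^ 2 / 2)) := by
        calc -((v - 1) ^ 2 / 2) = Real.log (Real.exp (-(v - 1) ^ 2 / 2)) := by
              rw [Real.log_exp]; ring
          _ ≤ _ := Real.log_le_log (Real.exp_pos _) hIv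
      linarith
    -- numeric: log √(2π) ≤ 0.924
    have hs : Real.sqrt (2 * Real.pi) ≤ 2.51 := by
      rw [show (2.51 : ℝ) = Real.sqrt (2.51 ^ 2) by rw [Real.sqrt_sq]; norm_num]
      apply Real.sqrt_le_sqrt
      nlinarith [Real.pi_lt_d2]
    have hlogs : Real.log (Real.sqrt (2 * Real.pi)) ≤ 0.924 := by
      calc Real.log (Real.sqrt (2 * Real.pi)) ≤ Real.sqrt (2 * Real.pi) / Real.exp 1 :=
            log_le_div_e hsq
        _ ≤ 2.51 / 2.7182818283 := by
            apply div_le_div₀ (by norm_num) hs (by norm_num)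
            exact le_of_lt Real.exp_one_gt_d9
        _ ≤ 0.924 := by norm_num
    -- arithmetic
    have hM2 : 1 / v ^ 2 ≤ 1 / M ^ 2 := by
      apply one_div_le_one_div_of_le (by positivity)
      nlinarith
    have harith : (v - 1) ^ 2 / 2 + 0.924 ≤ 2 * v ^ 2 + 1 / v ^ 2 := by
      have hv0 : v ≠ 0 := by intro h; rw [h] at hv1; norm_num at hv1
      have hu : 1 / v ^ 2 * v ^ 2 = 1 := by field_simp
      nlinarith [sq_nonneg (v + 1), sq_nonneg ((v + 1) * v), sq_nonneg v, sq_nonneg (v + 1) , mul_pos (pow_pos (show (0:ℝ) < -v by linarith) 2) (pow_pos (show (0:ℝ) < -v by linarith) 2)]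
    linarith
  · -- case v ≥ -M
    intro hv
    have hIM : 0 < ∫ t in Set.Iic (-M), Real.exp (-t ^ 2 / 2) := Iint_pos (-M)
    have hpsiv : (Real.sqrt (2 * Real.pi))⁻¹ * (∫ t in Set.Iic (-M), Real.exp (-t ^ 2 / 2))
        ≤ stdNormalCDF v := by
      unfold stdNormalCDF
      exact mul_le_mul_of_nonneg_left (Iint_mono hv) (by positivity)
    have hnum : stdNormalCDF w - stdNormalCDF v ≤ (Real.sqrt (2 * Real.pi))⁻¹ * (w - v) := by
      unfold stdNormalCDF
      rw [← mul_sub]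
      exact mul_le_mul_of_nonneg_left (diff_le v w hwv.le) (by positivity)
    have hstep : Real.log (stdNormalCDF w) - Real.log (stdNormalCDF v)
        ≤ (stdNormalCDF w - stdNormalCDF v) / stdNormalCDF v := by
      rw [← Real.log_div (psi_pos w).ne' (psi_pos v).ne']
      have := Real.log_le_sub_one_of_pos (div_pos (psi_pos w) (psi_pos v))
      calc Real.log (stdNormalCDF w / stdNormalCDF v) ≤ stdNormalCDF w / stdNormalCDF v - 1 := this
        _ = (stdNormalCDF w - stdNormalCDF v) / stdNormalCDF v := by
            rw [sub_div, div_self (psi_pos v).ne']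
    have hmono : stdNormalCDF v ≤ stdNormalCDF w := by
      unfold stdNormalCDF
      exact mul_le_mul_of_nonneg_left (Iint_mono hwv.le) (by positivity)
    have hfinal : (stdNormalCDF w - stdNormalCDF v) / stdNormalCDF v
        ≤ ((Real.sqrt (2 * Real.pi))⁻¹ * (w - v)) /
          ((Real.sqrt (2 * Real.pi))⁻¹ * (∫ t in Set.Iic (-M), Real.exp (-t ^ 2 / 2))) := by
      exact div_le_div₀ (mul_nonneg (by positivity) (by linarith)) hnum (by positivity) hpsiv
    have heq : ((Real.sqrt (2 * Real.pi))⁻¹ * (w - v)) /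
          ((Real.sqrt (2 * Real.pi))⁻¹ * (∫ t in Set.Iic (-M), Real.exp (-t ^ 2 / 2)))
        = (w - v) / ∫ t in Set.Iic (-M), Real.exp (-t ^ 2 / 2) := by
      rw [mul_div_mul_left _ _ (by positivity)]
    linarith [hstep, hfinal, heq ▸ hfinal]
end
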